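/- Let ε ∈ (0,1) and let π be a schedule with cost(π) > (1+ε)·OPT. Then there exist jobs j, j' with μ_j > μ_{j'} and π(j) < π(j') such that μ_j − μ_{j'} ≥ ε·cost(π)/n². -/

import Mathlib

/-- Key identity: the cost equals a sum over ordered pairs. -/
lemma cost_eq_pair_sum (n : ℕ) (μ : Fin n → ℝ) (τ : Equiv.Perm (Fin n)) :
    ∑ j, ((n : ℝ) - (τ j : ℕ)) * μ j
      = ∑ p ∈ Finset.univ ×ˢ Finset.univ,
          (if τ p.1 ≤ τ p.2 then μ p.1 else 0) := by
  rw [Finset.sum_product]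
  refine Finset.sum_congr rfl fun j _ => ?_
  have hcard : (Finset.univ.filter fun k => τ j ≤ τ k).card = n - (τ j : ℕ) := by
    rw [show (Finset.univ.filter fun k => τ j ≤ τ k).card
        = (Finset.univ.filter fun p => τ j ≤ p).card from
      Finset.card_bij (fun k _ => τ k)
        (by intro a ha
            simp only [Finset.mem_filter, Finset.mem_univ, true_and] at ha ⊢
            exact ha)
        (by intro a ha b hb h; exact τ.injective h)
        (by intro b hb
            refine ⟨τ.symm b, ?_, by simp⟩
            simp only [Finset.mem_filter, Finset.mem_univ, true_and] at hb ⊢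
            simpa using hb)]
    have : (Finset.univ.filter fun p : Fin n => τ j ≤ p) = Finset.Ici (τ j) := by
      ext p; simp
    rw [this, Fin.card_Ici]
  have : ∑ k, (if τ j ≤ τ k then μ j else 0)
      = ((Finset.univ.filter fun k => τ j ≤ τ k).card : ℝ) * μ j := by
    rw [← Finset.sum_filter, Finset.sum_const, nsmul_eq_mul]
  rw [this, hcard]
  have hle : (τ j : ℕ) ≤ n := (τ j).isLt.le
  push_cast [Nat.cast_sub hle]
  ring

/-- If a schedule `π` has `cost(π) > (1+ε)·OPT` with `ε ∈ (0,1)`, then there is an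
inverted pair of jobs `j, j'` (with `μ_j > μ_{j'}` and `π(j) < π(j')`) whose gap
satisfies `μ_j − μ_{j'} ≥ ε·cost(π)/n²`. -/
theorem large_gap_inversion_exists
    (n : ℕ) (hn : 1 ≤ n) (μ : Fin n → ℝ) (hμ : ∀ j, μ j ∈ Set.Icc (0 : ℝ) 1)
    (cost : Equiv.Perm (Fin n) → ℝ)
    (hcost : ∀ π : Equiv.Perm (Fin n), cost π = ∑ j, ((n : ℝ) - (π j : ℕ)) * μ j)
    (OPT : ℝ)
    (hOPT : OPT = Finset.univ.inf' Finset.univ_nonempty cost)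
    (ε : ℝ) (hε : ε ∈ Set.Ioo (0 : ℝ) 1)
    (π : Equiv.Perm (Fin n)) (hπ : (1 + ε) * OPT < cost π) :
    ∃ j j' : Fin n, μ j' < μ j ∧ π j < π j' ∧
      ε * cost π / (n : ℝ) ^ 2 ≤ μ j - μ j' := by
  obtain ⟨hε0, hε1⟩ := hε
  by_contra hno
  push_neg at hno
  -- basic positivity facts
  have hcost_nonneg : ∀ τ : Equiv.Perm (Fin n), 0 ≤ cost τ := by
    intro τ
    rw [hcost]
    refine Finset.sum_nonneg fun j _ => mul_nonneg ?_ (hμ j).1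
    have h1 : (τ j : ℕ) < n := (τ j).isLt
    have h2 : ((τ j : ℕ) : ℝ) < (n : ℝ) := by exact_mod_cast h1
    linarith
  have hOPT_nonneg : 0 ≤ OPT := by
    rw [hOPT]
    exact Finset.le_inf' _ _ fun τ _ => hcost_nonneg τ
  have hcπ_pos : 0 < cost π := lt_of_le_of_lt (by nlinarith) hπ
  have hn_pos : (0 : ℝ) < (n : ℝ) := by exact_mod_cast hn
  set g : ℝ := ε * cost π / (n : ℝ) ^ 2 with hg
  have hg_pos : 0 < g := by positivity
  -- the sorted permutation
  set σ : Equiv.Perm (Fin n) := (Tuple.sort μ)⁻¹ with hσ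
  have hσ_mono : ∀ a b : Fin n, μ a < μ b → σ a < σ b := by
    intro a b hab
    by_contra h
    push_neg at h
    have hmono := Tuple.monotone_sort μ
    have h1 : (μ ∘ Tuple.sort μ) (σ b) ≤ (μ ∘ Tuple.sort μ) (σ a) := hmono h
    simp only [Function.comp_apply] at h1
    have ha : Tuple.sort μ (σ a) = a := by simp [hσ]
    have hb : Tuple.sort μ (σ b) = b := by simp [hσ]
    rw [ha, hb] at h1
    linarith
  -- symmetrized identity for any two permutations
  have hswap : ∀ τ : Equiv.Perm (Fin n),
      ∑ p ∈ Finset.univ ×ˢ Finset.univ, (if τ p.1 ≤ τ p.2 then μ p.1 else 0)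
        = ∑ p ∈ Finset.univ ×ˢ Finset.univ, (if τ p.2 ≤ τ p.1 then μ p.2 else 0) := by
    intro τ
    exact Finset.sum_nbij' (fun p => (p.2, p.1)) (fun p => (p.2, p.1))
      (by simp) (by simp) (by simp) (by simp) (by simp)
  have hsym : ∀ α β : Equiv.Perm (Fin n),
      2 * (cost α - cost β) = ∑ p ∈ Finset.univ ×ˢ Finset.univ,
        (((if α p.1 ≤ α p.2 then μ p.1 else 0) + (if α p.2 ≤ α p.1 then μ p.2 else 0))
          - ((if β p.1 ≤ β p.2 then μ p.1 else 0) + (if β p.2 ≤ β p.1 then μ p.2 else 0))) := by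
    intro α β
    simp only [Finset.sum_sub_distrib, Finset.sum_add_distrib]
    rw [hcost α, hcost β, cost_eq_pair_sum n μ α, cost_eq_pair_sum n μ β,
      ← hswap α, ← hswap β]
    ring
  -- the sorted permutation is optimal
  have hσ_opt : cost σ ≤ OPT := by
    obtain ⟨τ, -, hτ⟩ := Finset.exists_mem_eq_inf' (Finset.univ_nonempty) cost
    rw [hOPT, hτ]
    have h0 : 2 * (cost σ - cost τ) ≤ 0 := by
      rw [hsym σ τ]
      refine Finset.sum_nonpos ?_
      rintro ⟨j, k⟩ -
      rcases eq_or_ne j k with rfl | hjk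
      · simp
      · have hσne : σ j ≠ σ k := fun h => hjk (σ.injective h)
        have hτne : τ j ≠ τ k := fun h => hjk (τ.injective h)
        rcases hσne.lt_or_gt with hσlt | hσlt <;>
          rcases hτne.lt_or_gt with hτlt | hτlt
        · rw [if_pos hσlt.le, if_neg (not_le.2 hσlt), if_pos hτlt.le, if_neg (not_le.2 hτlt)]
          linarith
        · rw [if_pos hσlt.le, if_neg (not_le.2 hσlt), if_neg (not_le.2 hτlt), if_pos hτlt.le]
          have : μ j ≤ μ k := by
            by_contra h
            exact absurd (hσ_mono k j (not_le.1 h)) (not_lt.2 hσlt.le)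
          linarith
        · rw [if_neg (not_le.2 hσlt), if_pos hσlt.le, if_pos hτlt.le, if_neg (not_le.2 hτlt)]
          have : μ k ≤ μ j := by
            by_contra h
            exact absurd (hσ_mono j k (not_le.1 h)) (not_lt.2 hσlt.le)
          linarith
        · rw [if_neg (not_le.2 hσlt), if_pos hσlt.le, if_neg (not_le.2 hτlt), if_pos hτlt.le]
          linarith
    linarith
  -- termwise bound for π vs σ
  have hterm : ∀ p ∈ Finset.univ ×ˢ Finset.univ,
      (((if π p.1 ≤ π p.2 then μ p.1 else 0) + (if π p.2 ≤ π p.1 then μ p.2 else 0))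
        - ((if σ p.1 ≤ σ p.2 then μ p.1 else 0) + (if σ p.2 ≤ σ p.1 then μ p.2 else 0))) ≤ g := by
    rintro ⟨j, k⟩ -
    rcases eq_or_ne j k with rfl | hjk
    · simp; linarith
    · have hπne : π j ≠ π k := fun h => hjk (π.injective h)
      have hσne : σ j ≠ σ k := fun h => hjk (σ.injective h)
      rcases hπne.lt_or_gt with hπlt | hπlt <;>
        rcases hσne.lt_or_gt with hσlt | hσlt
      · rw [if_pos hπlt.le, if_neg (not_le.2 hπlt), if_pos hσlt.le, if_neg (not_le.2 hσlt)]
        linarith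
      · rw [if_pos hπlt.le, if_neg (not_le.2 hπlt), if_neg (not_le.2 hσlt), if_pos hσlt.le]
        rcases le_or_gt (μ j) (μ k) with h | h
        · linarith
        · have := hno j k h hπlt
          linarith
      · rw [if_neg (not_le.2 hπlt), if_pos hπlt.le, if_pos hσlt.le, if_neg (not_le.2 hσlt)]
        rcases le_or_gt (μ k) (μ j) with h | h
        · linarith
        · have := hno k j h hπlt
          linarith
      · rw [if_neg (not_le.2 hπlt), if_pos hπlt.le, if_neg (not_le.2 hσlt), if_pos hσlt.le]
        linarith
  have hsum_le : 2 * (cost π - cost σ) ≤ (n : ℝ) ^ 2 * g := by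
    rw [hsym π σ]
    calc _ ≤ ∑ _p ∈ Finset.univ ×ˢ Finset.univ, g := Finset.sum_le_sum hterm
      _ = ((Finset.univ ×ˢ Finset.univ : Finset (Fin n × Fin n)).card : ℝ) * g := by
          rw [Finset.sum_const, nsmul_eq_mul]
      _ = (n : ℝ) ^ 2 * g := by
          rw [Finset.card_product]
          simp [sq]
  have hn2 : ((n : ℝ) ^ 2) ≠ 0 := by positivity
  have hfin : 2 * (cost π - cost σ) ≤ ε * cost π := by
    calc 2 * (cost π - cost σ) ≤ (n : ℝ) ^ 2 * g := hsum_le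
      _ = ε * cost π := by rw [hg]; field_simp
  nlinarith [mul_pos (mul_pos hε0 hcπ_pos) (sub_pos.2 hε1)]
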